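/- (Fay identity) For τ in the upper half-plane and all ξ₁, ξ₂, α₁, α₂ ∈ ℂ such that all Kronecker series values occurring below are defined (i.e. all theta denominators are nonzero), one has F_τ(ξ₁, α₁)·F_τ(ξ₂, α₂) = F_τ(ξ₁−ξ₂, α₁)·F_τ(ξ₂, α₁+α₂) + F_τ(ξ₂−ξ₁, α₂)·F_τ(ξ₁, α₁+α₂). -/

import Mathlib

noncomputable section

/-- The odd Jacobi theta function
`θ_τ(ξ) = Σ_{n ∈ ℤ} (-1)^n e^{πiτ(n+1/2)²} e^{2πi(n+1/2)ξ}`. -/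
def theta (τ ξ : ℂ) : ℂ :=
  ∑' n : ℤ, (-1 : ℂ) ^ n * Complex.exp (Real.pi * Complex.I * τ * ((n : ℂ) + 1 / 2) ^ 2) *
    Complex.exp (2 * Real.pi * Complex.I * ((n : ℂ) + 1 / 2) * ξ)

/-- The Kronecker series `F_τ(ξ, α) = θ'_τ(0)·θ_τ(ξ+α)/(θ_τ(ξ)·θ_τ(α))`. -/
def kronecker (τ ξ α : ℂ) : ℂ :=
  deriv (theta τ) 0 * theta τ (ξ + α) / (theta τ ξ * theta τ α)

/-! ### Auxiliary machinery for the Fay identity -/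

namespace FayAux

abbrev J := ℤ × ℤ × ℤ × ℤ

/-- The individual term of the theta series. -/
def Tm (τ z : ℂ) (n : ℤ) : ℂ :=
  (-1 : ℂ) ^ n * Complex.exp (Real.pi * Complex.I * τ * ((n : ℂ) + 1 / 2) ^ 2) *
    Complex.exp (2 * Real.pi * Complex.I * ((n : ℂ) + 1 / 2) * z)

lemma theta_eq (τ z : ℂ) : theta τ z = ∑' n : ℤ, Tm τ z n := rfl

lemma neg_one_zpow_eq (n : ℤ) : (-1 : ℂ) ^ n = Complex.exp (n * (Real.pi * Complex.I)) := by
  rw [Complex.exp_int_mul, Complex.exp_pi_mul_I]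

lemma exp_eq_exp_of_int (E₁ E₂ : ℂ) (K : ℤ) (h : E₁ = E₂ + K * (2 * Real.pi * Complex.I)) :
    Complex.exp E₁ = Complex.exp E₂ := by
  rw [h, Complex.exp_add, Complex.exp_int_mul_two_pi_mul_I, mul_one]

lemma exp_eq_neg_exp_of_int (E₁ E₂ : ℂ) (K : ℤ)
    (h : E₁ = E₂ + Real.pi * Complex.I + K * (2 * Real.pi * Complex.I)) :
    Complex.exp E₁ = -Complex.exp E₂ := by
  rw [h, Complex.exp_add, Complex.exp_int_mul_two_pi_mul_I, mul_one, Complex.exp_add,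
    Complex.exp_pi_mul_I, mul_neg_one]

lemma Tm_eq (τ z : ℂ) (n : ℤ) :
    Tm τ z n = Complex.exp (Real.pi * Complex.I * τ / 4 + Real.pi * Complex.I * z) *
      jacobiTheta₂_term n (z + τ / 2 + 1 / 2) τ := by
  rw [Tm, jacobiTheta₂_term, neg_one_zpow_eq, ← Complex.exp_add, ← Complex.exp_add,
    ← Complex.exp_add]
  congr 1
  ring

lemma summable_Tm {τ : ℂ} (hτ : 0 < τ.im) (z : ℂ) : Summable (Tm τ z) := by
  have := (summable_jacobiTheta₂_term_iff (z + τ / 2 + 1 / 2) τ).2 hτ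
  simpa [funext fun n => Tm_eq τ z n] using this.mul_left
    (Complex.exp (Real.pi * Complex.I * τ / 4 + Real.pi * Complex.I * z))

lemma Tm_neg (τ z : ℂ) (n : ℤ) : Tm τ (-z) n = - Tm τ z (-1 - n) := by
  have h1 : - Tm τ z (-1 - n) = Complex.exp (Real.pi * Complex.I) *
      Complex.exp ((((-1 - n : ℤ) : ℂ)) * (Real.pi * Complex.I)) *
      Complex.exp (Real.pi * Complex.I * τ * ((((-1 - n : ℤ) : ℂ)) + 1 / 2) ^ 2) *
      Complex.exp (2 * Real.pi * Complex.I * ((((-1 - n : ℤ) : ℂ)) + 1 / 2) * z) := by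
    rw [Tm, neg_one_zpow_eq, Complex.exp_pi_mul_I]; ring
  rw [h1, Tm, neg_one_zpow_eq, ← Complex.exp_add, ← Complex.exp_add, ← Complex.exp_add,
    ← Complex.exp_add, ← Complex.exp_add]
  refine exp_eq_exp_of_int _ _ n ?_
  push_cast
  ring

/-- The theta function is odd. -/
lemma theta_neg (τ z : ℂ) : theta τ (-z) = - theta τ z := by
  rw [theta_eq, theta_eq, ← tsum_neg]
  have := (Equiv.subLeft (-1 : ℤ)).tsum_eq (fun n => -Tm τ z n)
  rw [← this]
  exact tsum_congr fun n => by simpa [Equiv.subLeft] using Tm_neg τ z n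

/-- The generic term of a product of four theta series. -/
def Fm (τ z₁ z₂ z₃ z₄ : ℂ) (n : J) : ℂ :=
  Tm τ z₁ n.1 * (Tm τ z₂ n.2.1 * (Tm τ z₃ n.2.2.1 * Tm τ z₄ n.2.2.2))

lemma summable_norm_Fm {τ : ℂ} (hτ : 0 < τ.im) (z₁ z₂ z₃ z₄ : ℂ) :
    Summable fun n : J => ‖Fm τ z₁ z₂ z₃ z₄ n‖ := by
  have h : ∀ z, Summable fun n : ℤ => ‖Tm τ z n‖ := fun z => (summable_Tm hτ z).norm
  have h34 := (summable_mul_of_summable_norm (h z₃) (h z₄)).norm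
  have h234 := (summable_mul_of_summable_norm (h z₂) h34).norm
  exact (summable_mul_of_summable_norm (h z₁) h234).norm

lemma summable_Fm {τ : ℂ} (hτ : 0 < τ.im) (z₁ z₂ z₃ z₄ : ℂ) :
    Summable (Fm τ z₁ z₂ z₃ z₄) := (summable_norm_Fm hτ z₁ z₂ z₃ z₄).of_norm

lemma prod_theta_eq {τ : ℂ} (hτ : 0 < τ.im) (z₁ z₂ z₃ z₄ : ℂ) :
    (∑' n : ℤ, Tm τ z₁ n) * ((∑' n : ℤ, Tm τ z₂ n) * ((∑' n : ℤ, Tm τ z₃ n) *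
      (∑' n : ℤ, Tm τ z₄ n))) = ∑' n : J, Fm τ z₁ z₂ z₃ z₄ n := by
  have h : ∀ z, Summable fun n : ℤ => ‖Tm τ z n‖ := fun z => (summable_Tm hτ z).norm
  have h34 := (summable_mul_of_summable_norm (h z₃) (h z₄)).norm
  have h234 := (summable_mul_of_summable_norm (h z₂) h34).norm
  rw [tsum_mul_tsum_of_summable_norm (h z₃) (h z₄),
    tsum_mul_tsum_of_summable_norm (h z₂) h34,
    tsum_mul_tsum_of_summable_norm (h z₁) h234]
  rfl

/-- Parametrization of indices with even coordinate sum. -/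
def um (a : J) : J := (a.1, a.2.1, a.2.2.1, a.1 + a.2.1 + a.2.2.1 + 2 * a.2.2.2)

/-- Parametrization of indices with odd coordinate sum. -/
def vm (a : J) : J := (a.1, a.2.1, a.2.2.1, a.1 + a.2.1 + a.2.2.1 + 2 * a.2.2.2 + 1)

def Sev : Set J := {n | (n.1 + n.2.1 + n.2.2.1 + n.2.2.2) % 2 = 0}

def eEven : J ≃ Sev where
  toFun a := ⟨um a, by simp only [Sev, um, Set.mem_setOf_eq]; omega⟩
  invFun x := (x.1.1, x.1.2.1, x.1.2.2.1, (x.1.2.2.2 - x.1.1 - x.1.2.1 - x.1.2.2.1) / 2)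
  left_inv a := by
    obtain ⟨a1, a2, a3, a4⟩ := a
    simp only [um]
    refine Prod.ext rfl (Prod.ext rfl (Prod.ext rfl ?_))
    simp only
    omega
  right_inv x := by
    obtain ⟨⟨n1, n2, n3, n4⟩, hx⟩ := x
    simp only [Sev, Set.mem_setOf_eq] at hx
    refine Subtype.ext ?_
    simp only [um]
    refine Prod.ext rfl (Prod.ext rfl (Prod.ext rfl ?_))
    simp only
    omega

def eOdd : J ≃ (Sevᶜ : Set J) where
  toFun a := ⟨vm a, by simp only [Sev, vm, Set.mem_compl_iff, Set.mem_setOf_eq]; omega⟩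
  invFun x := (x.1.1, x.1.2.1, x.1.2.2.1, (x.1.2.2.2 - x.1.1 - x.1.2.1 - x.1.2.2.1 - 1) / 2)
  left_inv a := by
    obtain ⟨a1, a2, a3, a4⟩ := a
    simp only [vm]
    refine Prod.ext rfl (Prod.ext rfl (Prod.ext rfl ?_))
    simp only
    omega
  right_inv x := by
    obtain ⟨⟨n1, n2, n3, n4⟩, hx⟩ := x
    simp only [Sev, Set.mem_compl_iff, Set.mem_setOf_eq] at hx
    refine Subtype.ext ?_
    simp only [vm]
    refine Prod.ext rfl (Prod.ext rfl (Prod.ext rfl ?_))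
    simp only
    omega

lemma tsum_split {f : J → ℂ} (hf : Summable f) :
    ∑' n : J, f n = (∑' a : J, f (um a)) + ∑' a : J, f (vm a) := by
  rw [← Summable.tsum_subtype_add_tsum_subtype_compl hf Sev]
  congr 1
  · rw [← eEven.tsum_eq (fun x : Sev => f x)]; rfl
  · rw [← eOdd.tsum_eq (fun x : (Sevᶜ : Set J) => f x)]; rfl

def em₁ : J ≃ J where
  toFun a := (a.1 + a.2.2.1 + a.2.2.2, a.1 + a.2.1 + a.2.2.2, -a.2.2.2, -a.1)
  invFun p := (-p.2.2.2, p.2.1 + p.2.2.1 + p.2.2.2, p.1 + p.2.2.1 + p.2.2.2, -p.2.2.1)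
  left_inv a := by
    obtain ⟨a, b, c, d⟩ := a
    refine Prod.ext ?_ (Prod.ext ?_ (Prod.ext ?_ ?_)) <;> simp <;> omega
  right_inv p := by
    obtain ⟨p, q, r, s⟩ := p
    refine Prod.ext ?_ (Prod.ext ?_ (Prod.ext ?_ ?_)) <;> simp <;> omega

def em₂ : J ≃ J where
  toFun a := (-a.2.1 - a.2.2.2 - 1, a.1 + a.2.1 + a.2.2.1 + a.2.2.2 + 1, -a.2.2.1 - a.2.2.2 - 1,
    a.2.2.2)
  invFun p := (p.1 + p.2.1 + p.2.2.1 + p.2.2.2 + 1, -p.1 - p.2.2.2 - 1, -p.2.2.1 - p.2.2.2 - 1,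
    p.2.2.2)
  left_inv a := by
    obtain ⟨a, b, c, d⟩ := a
    refine Prod.ext ?_ (Prod.ext ?_ (Prod.ext ?_ ?_)) <;> simp <;> omega
  right_inv p := by
    obtain ⟨p, q, r, s⟩ := p
    refine Prod.ext ?_ (Prod.ext ?_ (Prod.ext ?_ ?_)) <;> simp <;> omega

def em₃ : J ≃ J where
  toFun a := (-a.2.1 - a.2.2.2 - 1, a.1 + a.2.1 + a.2.2.1 + a.2.2.2 + 1, -a.1 - a.2.2.2 - 1,
    -a.2.2.1)
  invFun p := (p.1 + p.2.1 + p.2.2.2, p.2.1 + p.2.2.1 + p.2.2.2, -p.2.2.2,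
    -p.1 - p.2.1 - p.2.2.1 - p.2.2.2 - 1)
  left_inv a := by
    obtain ⟨a, b, c, d⟩ := a
    refine Prod.ext ?_ (Prod.ext ?_ (Prod.ext ?_ ?_)) <;> simp <;> omega
  right_inv p := by
    obtain ⟨p, q, r, s⟩ := p
    refine Prod.ext ?_ (Prod.ext ?_ (Prod.ext ?_ ?_)) <;> simp <;> omega

lemma match₁ (τ ξ₁ ξ₂ α₁ α₂ : ℂ) (x : J) :
    Fm τ (ξ₁ + α₁) (ξ₂ + α₂) (ξ₁ - ξ₂) (α₁ + α₂) (um x) =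
      Fm τ (ξ₁ - ξ₂ + α₁) (ξ₂ + α₁ + α₂) ξ₁ α₂ (um (em₁ x)) := by
  obtain ⟨a, b, c, d⟩ := x
  simp only [Fm, Tm, um, em₁, Equiv.coe_fn_mk, neg_one_zpow_eq, ← Complex.exp_add, mul_assoc]
  refine exp_eq_exp_of_int _ _ 0 ?_
  push_cast
  ring

lemma match₂ (τ ξ₁ ξ₂ α₁ α₂ : ℂ) (x : J) :
    Fm τ (ξ₁ + α₁) (ξ₂ + α₂) (ξ₁ - ξ₂) (α₁ + α₂) (vm x) =
      Fm τ (ξ₁ - ξ₂ - α₂) (ξ₁ + α₁ + α₂) ξ₂ α₁ (vm (em₂ x)) := by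
  obtain ⟨a, b, c, d⟩ := x
  simp only [Fm, Tm, vm, em₂, Equiv.coe_fn_mk, neg_one_zpow_eq, ← Complex.exp_add, mul_assoc]
  refine exp_eq_exp_of_int _ _ (b + c + d + 1) ?_
  push_cast
  ring

lemma match₃ (τ ξ₁ ξ₂ α₁ α₂ : ℂ) (x : J) :
    Fm τ (ξ₁ - ξ₂ + α₁) (ξ₂ + α₁ + α₂) ξ₁ α₂ (vm x) =
      -Fm τ (ξ₁ - ξ₂ - α₂) (ξ₁ + α₁ + α₂) ξ₂ α₁ (um (em₃ x)) := by
  obtain ⟨a, b, c, d⟩ := x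
  simp only [Fm, Tm, vm, um, em₃, Equiv.coe_fn_mk, neg_one_zpow_eq, ← Complex.exp_add, mul_assoc]
  refine exp_eq_neg_exp_of_int _ _ (a + b + c + 2 * d + 1) ?_
  push_cast
  ring

/-- The Weierstrass/Fay three-term identity for products of four theta functions. -/
lemma theta_four {τ : ℂ} (hτ : 0 < τ.im) (ξ₁ ξ₂ α₁ α₂ : ℂ) :
    theta τ (ξ₁ + α₁) * (theta τ (ξ₂ + α₂) * (theta τ (ξ₁ - ξ₂) * theta τ (α₁ + α₂))) =
      theta τ (ξ₁ - ξ₂ + α₁) * (theta τ (ξ₂ + α₁ + α₂) * (theta τ ξ₁ * theta τ α₂)) +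
      theta τ (ξ₁ - ξ₂ - α₂) * (theta τ (ξ₁ + α₁ + α₂) * (theta τ ξ₂ * theta τ α₁)) := by
  simp only [theta_eq]
  rw [prod_theta_eq hτ, prod_theta_eq hτ, prod_theta_eq hτ]
  rw [tsum_split (summable_Fm hτ _ _ _ _), tsum_split (summable_Fm hτ _ _ _ _),
    tsum_split (summable_Fm hτ _ _ _ _)]
  have h1 : (∑' a : J, Fm τ (ξ₁ + α₁) (ξ₂ + α₂) (ξ₁ - ξ₂) (α₁ + α₂) (um a)) =
      ∑' a : J, Fm τ (ξ₁ - ξ₂ + α₁) (ξ₂ + α₁ + α₂) ξ₁ α₂ (um a) := by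
    rw [← em₁.tsum_eq (fun a => Fm τ (ξ₁ - ξ₂ + α₁) (ξ₂ + α₁ + α₂) ξ₁ α₂ (um a))]
    exact tsum_congr fun x => match₁ τ ξ₁ ξ₂ α₁ α₂ x
  have h2 : (∑' a : J, Fm τ (ξ₁ + α₁) (ξ₂ + α₂) (ξ₁ - ξ₂) (α₁ + α₂) (vm a)) =
      ∑' a : J, Fm τ (ξ₁ - ξ₂ - α₂) (ξ₁ + α₁ + α₂) ξ₂ α₁ (vm a) := by
    rw [← em₂.tsum_eq (fun a => Fm τ (ξ₁ - ξ₂ - α₂) (ξ₁ + α₁ + α₂) ξ₂ α₁ (vm a))]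
    exact tsum_congr fun x => match₂ τ ξ₁ ξ₂ α₁ α₂ x
  have h3 : (∑' a : J, Fm τ (ξ₁ - ξ₂ + α₁) (ξ₂ + α₁ + α₂) ξ₁ α₂ (vm a)) =
      -∑' a : J, Fm τ (ξ₁ - ξ₂ - α₂) (ξ₁ + α₁ + α₂) ξ₂ α₁ (um a) := by
    rw [← tsum_neg, ← em₃.tsum_eq (fun a => -Fm τ (ξ₁ - ξ₂ - α₂) (ξ₁ + α₁ + α₂) ξ₂ α₁ (um a))]
    exact tsum_congr fun x => match₃ τ ξ₁ ξ₂ α₁ α₂ x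
  rw [h1, h2, h3]
  ring

end FayAux

/-- The Fay identity for the Kronecker series:
`F_τ(ξ₁,α₁)·F_τ(ξ₂,α₂) = F_τ(ξ₁-ξ₂,α₁)·F_τ(ξ₂,α₁+α₂) + F_τ(ξ₂-ξ₁,α₂)·F_τ(ξ₁,α₁+α₂)`,
whenever all the Kronecker series values occurring are defined. -/
theorem kronecker_fay (τ ξ₁ ξ₂ α₁ α₂ : ℂ) (hτ : 0 < τ.im)
    (hξ₁ : theta τ ξ₁ ≠ 0) (hξ₂ : theta τ ξ₂ ≠ 0)
    (hα₁ : theta τ α₁ ≠ 0) (hα₂ : theta τ α₂ ≠ 0)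
    (hξ₁₂ : theta τ (ξ₁ - ξ₂) ≠ 0) (hξ₂₁ : theta τ (ξ₂ - ξ₁) ≠ 0)
    (hα₁₂ : theta τ (α₁ + α₂) ≠ 0) :
    kronecker τ ξ₁ α₁ * kronecker τ ξ₂ α₂ =
      kronecker τ (ξ₁ - ξ₂) α₁ * kronecker τ ξ₂ (α₁ + α₂) +
      kronecker τ (ξ₂ - ξ₁) α₂ * kronecker τ ξ₁ (α₁ + α₂) := by
  have h4 := FayAux.theta_four hτ ξ₁ ξ₂ α₁ α₂
  have hodd1 : theta τ (ξ₂ - ξ₁) = -theta τ (ξ₁ - ξ₂) := by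
    rw [show ξ₂ - ξ₁ = -(ξ₁ - ξ₂) by ring, FayAux.theta_neg]
  have hodd2 : theta τ (ξ₂ - ξ₁ + α₂) = -theta τ (ξ₁ - ξ₂ - α₂) := by
    rw [show ξ₂ - ξ₁ + α₂ = -(ξ₁ - ξ₂ - α₂) by ring, FayAux.theta_neg]
  simp only [kronecker, hodd1, hodd2]
  field_simp
  ring_nf
  ring_nf at h4
  linear_combination (deriv (theta τ) 0) ^ 2 * h4

end
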